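/- arXiv:cs/0607033 — 3 statements merged into one kernel-verified Lean document; each statement's English description precedes it below -/
import Mathlib

section
/- Let S₀(s,t) be the set of vertices lying on at least one shortest s-t path of a connected graph G. If c is a cut vertex of the induced subgraph G[S₀(s,t)] (with c ∉ {s,t}), then c lies on every shortest s-t path of G. -/
/-- The set of vertices lying on at least one shortest `s`-`t` path of `G`. -/
def shortestPathVerts {V : Type*} (G : SimpleGraph V) (s t : V) : Set V :=
  {a | ∃ p : G.Walk s t, p.IsPath ∧ p.length = G.dist s t ∧ a ∈ p.support}

/-- `c` is a cut vertex of the subgraph of `G` induced on `S`: it belongs to `S`,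
the induced subgraph is connected, and deleting `c` disconnects it. -/
def IsCutVertexOn {V : Type*} (G : SimpleGraph V) (S : Set V) (c : V) : Prop :=
  c ∈ S ∧ (G.induce S).Connected ∧ ¬ (G.induce (S \ {c})).Preconnected

open SimpleGraph Walk in
private lemma reach_induce {V : Type*} {G : SimpleGraph V} {S : Set V} :
    ∀ {a b : V} (w : G.Walk a b), (∀ v ∈ w.support, v ∈ S) →
    ∀ (ha : a ∈ S) (hb : b ∈ S), (G.induce S).Reachable ⟨a, ha⟩ ⟨b, hb⟩ := by
  intro a b w
  induction w with
  | nil => intro _ ha hb; exact Reachable.refl _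
  | @cons a x b h w ih =>
    intro hsup ha hb
    have hx : x ∈ S := hsup x (by simp)
    have hadj : (G.induce S).Adj ⟨a, ha⟩ ⟨x, hx⟩ := by simpa using h
    exact hadj.reachable.trans (ih (fun v hv => hsup v (by simp [hv])) hx hb)

/-- If `c` is a cut vertex of `G[S₀(s,t)]` with `c ∉ {s,t}`, then `c` lies on every
shortest `s`-`t` path of `G`. -/
theorem stmt_5 {V : Type*} [Fintype V] (G : SimpleGraph V) (hG : G.Connected)
    (s t : V) (hst : s ≠ t) (c : V)
    (hc : IsCutVertexOn G (shortestPathVerts G s t) c) (hcs : c ≠ s) (hct : c ≠ t) :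
    ∀ p : G.Walk s t, p.IsPath → p.length = G.dist s t → c ∈ p.support := by
  classical
  intro p hp hl
  by_contra hcp
  set S0 := shortestPathVerts G s t with hS0
  have hPmem : ∀ v ∈ p.support, v ∈ S0 \ {c} := fun v hv =>
    ⟨⟨p, hp, hl, hv⟩, fun h => hcp ((Set.mem_singleton_iff.mp h) ▸ hv)⟩
  have hs : s ∈ S0 \ {c} := hPmem s p.start_mem_support
  have ht : t ∈ S0 \ {c} := hPmem t p.end_mem_support
  have hts : (G.induce (S0 \ {c})).Reachable ⟨t, ht⟩ ⟨s, hs⟩ :=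
    reach_induce p.reverse (fun v hv => hPmem v (by simpa using hv)) ht hs
  have key : ∀ (u : V) (hu : u ∈ S0 \ {c}),
      (G.induce (S0 \ {c})).Reachable ⟨u, hu⟩ ⟨s, hs⟩ := by
    intro u hu
    obtain ⟨⟨q, hq, hql, huq⟩, hunec⟩ := hu
    have hune : u ≠ c := hunec
    have hQmem : ∀ v ∈ q.support, v ∈ S0 := fun v hv => ⟨q, hq, hql, hv⟩
    by_cases hcq : c ∈ q.support
    · have huq' := huq
      rw [← q.take_spec hcq] at huq'
      rcases (SimpleGraph.Walk.mem_support_append_iff _ _).mp huq' with h1 | h2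
      · -- u lies before c
        set q1 := q.takeUntil c hcq with hq1def
        have hq1 : q1.IsPath := hq.takeUntil _
        set w := q1.takeUntil u h1 with hwdef
        have hcw : c ∉ w.support := by
          intro hcmem
          have hnodup : q1.support.Nodup := hq1.support_nodup
          rw [← q1.take_spec h1, SimpleGraph.Walk.support_append] at hnodup
          have hcB : c ∈ (q1.dropUntil u h1).support :=
            SimpleGraph.Walk.end_mem_support _
          have hctail : c ∈ (q1.dropUntil u h1).support.tail := by
            rw [SimpleGraph.Walk.support_eq_cons (q1.dropUntil u h1)] at hcB
            rcases List.mem_cons.mp hcB with h' | h'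
            · exact absurd h'.symm hune
            · exact h'
          exact (List.disjoint_of_nodup_append hnodup) hcmem hctail
        have hWmem : ∀ v ∈ w.support, v ∈ S0 \ {c} := fun v hv =>
          ⟨hQmem v (q.support_takeUntil_subset hcq (q1.support_takeUntil_subset h1 hv)),
           fun he => hcw ((Set.mem_singleton_iff.mp he) ▸ hv)⟩
        exact (reach_induce w hWmem hs ⟨⟨q, hq, hql, huq⟩, hunec⟩).symm
      · -- u lies after c
        set q2 := q.dropUntil c hcq with hq2def
        have hq2 : q2.IsPath := hq.dropUntil _
        set w := q2.dropUntil u h2 with hwdef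
        have hcw : c ∉ w.support := by
          intro hcmem
          have hnodup : q2.support.Nodup := hq2.support_nodup
          rw [← q2.take_spec h2, SimpleGraph.Walk.support_append] at hnodup
          have hcA : c ∈ (q2.takeUntil u h2).support :=
            SimpleGraph.Walk.start_mem_support _
          have hcB : c ∈ w.support.tail := by
            rw [SimpleGraph.Walk.support_eq_cons w] at hcmem
            rcases List.mem_cons.mp hcmem with h' | h'
            · exact absurd h'.symm hune
            · exact h'
          exact (List.disjoint_of_nodup_append hnodup) hcA hcB
        have hWmem : ∀ v ∈ w.support, v ∈ S0 \ {c} := fun v hv =>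
          ⟨hQmem v (q.support_dropUntil_subset hcq (q2.support_dropUntil_subset h2 hv)),
           fun he => hcw ((Set.mem_singleton_iff.mp he) ▸ hv)⟩
        exact (reach_induce w hWmem ⟨⟨q, hq, hql, huq⟩, hunec⟩ ht).trans hts
    · set w := q.takeUntil u huq with hwdef
      have hWmem : ∀ v ∈ w.support, v ∈ S0 \ {c} := fun v hv =>
        ⟨hQmem v (q.support_takeUntil_subset huq hv),
         fun he => hcq (q.support_takeUntil_subset huq ((Set.mem_singleton_iff.mp he) ▸ hv))⟩
      exact (reach_induce w hWmem hs ⟨⟨q, hq, hql, huq⟩, hunec⟩).symm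
  have hpre : (G.induce (S0 \ {c})).Preconnected := by
    rintro ⟨u, hu⟩ ⟨v, hv⟩
    exact (key u hu).trans (key v hv).symm
  exact hc.2.2 hpre
end

section
/- Let R be a rotation system on a connected graph G of minimum degree at least 3, and let R' be another rotation system on G with the same associated layout system, L(R') = L(R). Then R' = R or R' = R*, where R* is the conjugate of R. -/
/-- A rotation system on a graph `G`: a ternary relation `T` on the vertices such that
`T a b c` implies `b, c ∈ Γ(a)`, and for every vertex `a` the binary relation
`T a` is a directed cycle on the neighborhood `Γ(a)` (every neighbor has a unique
successor and a unique predecessor, and the digraph is connected). -/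
structure RotationSystem {V : Type*} (G : SimpleGraph V) where
  T : V → V → V → Prop
  mem_of : ∀ a b c : V, T a b c → b ∈ G.neighborSet a ∧ c ∈ G.neighborSet a
  succ_exists_unique : ∀ a b : V, b ∈ G.neighborSet a → ∃! c : V, T a b c
  pred_exists_unique : ∀ a c : V, c ∈ G.neighborSet a → ∃! b : V, T a b c
  cycle_connected : ∀ a b c : V, b ∈ G.neighborSet a → c ∈ G.neighborSet a →
    Relation.ReflTransGen (fun x y => T a x y) b c

/-- The conjugate rotation system `R*`, with `T*(a,b,c) = T(a,c,b)`. -/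
def RotationSystem.conj {V : Type*} {G : SimpleGraph V} (R : RotationSystem G) :
    RotationSystem G where
  T a b c := R.T a c b
  mem_of a b c h := ⟨(R.mem_of a c b h).2, (R.mem_of a c b h).1⟩
  succ_exists_unique a b hb := R.pred_exists_unique a b hb
  pred_exists_unique a c hc := R.succ_exists_unique a c hc
  cycle_connected a b c hb hc :=
    Relation.reflTransGen_swap.mpr (R.cycle_connected a c b hc hb)

/-- The ternary relation of the layout system associated with a rotation system:
`T_L(a,b,c) = T(a,b,c) ∨ T(a,c,b)` (the undirected version of each cycle). -/
def RotationSystem.layoutT {V : Type*} {G : SimpleGraph V} (R : RotationSystem G)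
    (a b c : V) : Prop :=
  R.T a b c ∨ R.T a c b

/-- The quaternary relation of the layout system associated with a rotation system.
`Q(b₁,a₁,a₂,b₂)` holds exactly for the quadruples
`(p_{a₁}(a₂), a₁, a₂, s_{a₂}(a₁))` and `(s_{a₁}(a₂), a₁, a₂, p_{a₂}(a₁))`
with `a₁, a₂` adjacent, phrased via the relation `T` (`s_a(b) = c ↔ T a b c`). -/
def RotationSystem.layoutQ {V : Type*} {G : SimpleGraph V} (R : RotationSystem G)
    (b₁ a₁ a₂ b₂ : V) : Prop :=
  (R.T a₁ b₁ a₂ ∧ R.T a₂ a₁ b₂) ∨ (R.T a₁ a₂ b₁ ∧ R.T a₂ b₂ a₁)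



section Aux

variable {V : Type*} {G : SimpleGraph V}

/-- Ternary relations determine the rotation system. -/
lemma RotationSystem.ext' {R₁ R₂ : RotationSystem G} (h : R₁.T = R₂.T) : R₁ = R₂ := by
  cases R₁; cases R₂; cases h; rfl

/-- No 2-cycles (or loops) in the cycle at a vertex of degree ≥ 3. -/
lemma no_two_cycle [Fintype V] [DecidableRel G.Adj] (R : RotationSystem G) (a : V)
    (hdeg : 3 ≤ G.degree a) {b c : V} (h1 : R.T a b c) (h2 : R.T a c b) : False := by
  classical
  have hb : b ∈ G.neighborSet a := (R.mem_of a b c h1).1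
  have hc : c ∈ G.neighborSet a := (R.mem_of a b c h1).2
  obtain ⟨d, hd, hdbc⟩ : ∃ d ∈ G.neighborFinset a, d ∉ ({b, c} : Finset V) := by
    by_contra hcon
    push_neg at hcon
    have hsub : G.neighborFinset a ⊆ ({b, c} : Finset V) := fun x hx => hcon x hx
    have := Finset.card_le_card hsub
    have h2' : ({b, c} : Finset V).card ≤ 2 := Finset.card_insert_le _ _ |>.trans (by simp)
    have : G.degree a ≤ 2 := by
      rw [← SimpleGraph.card_neighborFinset_eq_degree]; omega
    omega
  have hreach := R.cycle_connected a b d hb (by simpa using hd)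
  have key : ∀ x, Relation.ReflTransGen (fun x y => R.T a x y) b x →
      x ∈ ({b, c} : Finset V) := by
    intro x hx
    induction hx with
    | refl => simp
    | tail _ step ih =>
      rename_i u v _
      simp only [Finset.mem_insert, Finset.mem_singleton] at ih ⊢
      rcases ih with rfl | rfl
      · right; exact ((R.succ_exists_unique a u hb).unique step h1)
      · left; exact ((R.succ_exists_unique a u hc).unique step h2)
  exact hdbc (key d hreach)

/-- If `R'` and `R` have the same layout ternary relation and agree at one
directed pair at `a`, they agree at `a` everywhere. -/
lemma agree_propagate [Fintype V] [DecidableRel G.Adj] (R R' : RotationSystem G)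
    (hdeg : ∀ v, 3 ≤ G.degree v)
    (hT : ∀ a b c, R'.layoutT a b c ↔ R.layoutT a b c)
    {a b c : V} (h' : R'.T a b c) (h : R.T a b c) :
    ∀ x y, R'.T a x y ↔ R.T a x y := by
  have step : ∀ x y z, R.T a x y → R'.T a x y → R.T a y z → R'.T a y z := by
    intro x y z hxy hxy' hyz
    rcases (hT a y z).mpr (Or.inl hyz) with h1 | h1
    · exact h1
    · -- R'.T a z y : z is a predecessor of y in R', as is x
      have hy : y ∈ G.neighborSet a := (R.mem_of a x y hxy).2
      have hzx : z = x := (R'.pred_exists_unique a y hy).unique h1 hxy'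
      subst hzx
      exact absurd hyz (fun hh => no_two_cycle R a (hdeg a) hxy hh)
  -- P x : x has an agreeing incoming edge
  have P : ∀ x, Relation.ReflTransGen (fun u v => R.T a u v) c x →
      ∃ w, R.T a w x ∧ R'.T a w x := by
    intro x hx
    induction hx with
    | refl => exact ⟨b, h, h'⟩
    | tail _ st ih =>
      rename_i u v _
      obtain ⟨w, hw, hw'⟩ := ih
      exact ⟨u, st, step w u v hw hw' st⟩
  have fwd : ∀ x y, R.T a x y → R'.T a x y := by
    intro x y hxy
    have hx : x ∈ G.neighborSet a := (R.mem_of a x y hxy).1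
    have hc : c ∈ G.neighborSet a := (R.mem_of a b c h).2
    obtain ⟨w, hw, hw'⟩ := P x (R.cycle_connected a c x hc hx)
    exact step w x y hw hw' hxy
  intro x y
  refine ⟨fun hxy' => ?_, fwd x y⟩
  rcases (hT a x y).mp (Or.inl hxy') with h1 | h1
  · exact h1
  · exact absurd (fwd y x h1) (fun hh => no_two_cycle R' a (hdeg a) hxy' hh)

/-- Local dichotomy at each vertex. -/
lemma dichotomy [Fintype V] [DecidableRel G.Adj] (R R' : RotationSystem G)
    (hdeg : ∀ v, 3 ≤ G.degree v)
    (hT : ∀ a b c, R'.layoutT a b c ↔ R.layoutT a b c) (a : V) :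
    (∀ x y, R'.T a x y ↔ R.T a x y) ∨ (∀ x y, R'.T a x y ↔ R.conj.T a x y) := by
  classical
  obtain ⟨b, hb⟩ : ∃ b, b ∈ G.neighborSet a := by
    have : 0 < G.degree a := by have := hdeg a; omega
    rw [← SimpleGraph.card_neighborFinset_eq_degree, Finset.card_pos] at this
    obtain ⟨b, hb⟩ := this
    exact ⟨b, by simpa using hb⟩
  obtain ⟨c, hc, -⟩ := R'.succ_exists_unique a b hb
  rcases (hT a b c).mp (Or.inl hc) with h1 | h1
  · exact Or.inl (agree_propagate R R' hdeg hT hc h1)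
  · right
    have hTc : ∀ a b c, R'.layoutT a b c ↔ R.conj.layoutT a b c := by
      intro a b c
      rw [hT a b c]
      exact or_comm
    exact agree_propagate R.conj R' hdeg hTc hc h1

/-- Propagation of agreement across an edge, via the Q relation. -/
lemma edge_prop [Fintype V] [DecidableRel G.Adj] (R R' : RotationSystem G)
    (hdeg : ∀ v, 3 ≤ G.degree v)
    (hT : ∀ a b c, R'.layoutT a b c ↔ R.layoutT a b c)
    (hQ : ∀ b₁ a₁ a₂ b₂, R'.layoutQ b₁ a₁ a₂ b₂ ↔ R.layoutQ b₁ a₁ a₂ b₂)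
    {a₁ a₂ : V} (hadj : G.Adj a₁ a₂)
    (h1 : ∀ x y, R'.T a₁ x y ↔ R.T a₁ x y) :
    ∀ x y, R'.T a₂ x y ↔ R.T a₂ x y := by
  obtain ⟨b₁, hb₁, -⟩ := R.pred_exists_unique a₁ a₂ ((G.mem_neighborSet a₁ a₂).mpr hadj)  -- a₂ ∈ N(a₁)
  obtain ⟨b₂, hb₂, -⟩ := R.succ_exists_unique a₂ a₁ ((G.mem_neighborSet a₂ a₁).mpr hadj.symm)
  have hRQ : R.layoutQ b₁ a₁ a₂ b₂ := Or.inl ⟨hb₁, hb₂⟩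
  rcases (hQ b₁ a₁ a₂ b₂).mpr hRQ with ⟨-, h2⟩ | ⟨h3, -⟩
  · exact agree_propagate R R' hdeg hT h2 hb₂
  · exact absurd ((h1 a₂ b₁).mp h3) (fun hh => no_two_cycle R a₁ (hdeg a₁) hb₁ hh)

end Aux

/-- If two rotation systems on a connected graph of minimum degree at least 3 have the
same associated layout system, then they are equal or conjugate. -/
theorem stmt_11 {V : Type*} [Fintype V] (G : SimpleGraph V) [DecidableRel G.Adj]
    (hconn : G.Connected) (hdeg : ∀ v : V, 3 ≤ G.degree v)
    (R R' : RotationSystem G)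
    (hT : ∀ a b c : V, R'.layoutT a b c ↔ R.layoutT a b c)
    (hQ : ∀ b₁ a₁ a₂ b₂ : V, R'.layoutQ b₁ a₁ a₂ b₂ ↔ R.layoutQ b₁ a₁ a₂ b₂) :
    R' = R ∨ R' = R.conj := by
  classical
  obtain ⟨v₀⟩ := hconn.nonempty
  rcases dichotomy R R' hdeg hT v₀ with h | h
  · left
    apply RotationSystem.ext'
    funext a x y
    apply propext
    have key : ∀ a : V, Relation.ReflTransGen G.Adj v₀ a →
        ∀ x y, R'.T a x y ↔ R.T a x y := by
      intro a ha
      induction ha with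
      | refl => exact h
      | tail _ hadj ih => exact edge_prop R R' hdeg hT hQ hadj ih
    exact key a ((G.reachable_iff_reflTransGen v₀ a).mp (hconn v₀ a)) x y
  · right
    have hTc : ∀ a b c, R'.layoutT a b c ↔ R.conj.layoutT a b c := by
      intro a b c
      rw [hT a b c]
      exact or_comm
    have hQc : ∀ b₁ a₁ a₂ b₂, R'.layoutQ b₁ a₁ a₂ b₂ ↔ R.conj.layoutQ b₁ a₁ a₂ b₂ := by
      intro b₁ a₁ a₂ b₂
      rw [hQ b₁ a₁ a₂ b₂]
      exact or_comm
    apply RotationSystem.ext'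
    funext a x y
    apply propext
    have key : ∀ a : V, Relation.ReflTransGen G.Adj v₀ a →
        ∀ x y, R'.T a x y ↔ R.conj.T a x y := by
      intro a ha
      induction ha with
      | refl => exact h
      | tail _ hadj ih => exact edge_prop R.conj R' hdeg hTc hQc hadj ih
    exact key a ((G.reachable_iff_reflTransGen v₀ a).mp (hconn v₀ a)) x y
end

section
/- Let G be a connected graph with a rotation system and coordinates C_{ab} as above, and let v be a vertex with extreme-left shortest path P_v from a realizing C_{ab}(v). If u is an inner vertex of P_v with predecessor w on P_v, then C_{ab}(v) is the concatenation of C_{ab}(u) and C_{uw}(v). -/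
open scoped Classical

/-- The successor function of the directed cycle of `R` around `x`. -/
noncomputable def RotationSystem.succFn {V : Type*} {G : SimpleGraph V}
    (R : RotationSystem G) (x y : V) : V :=
  if h : y ∈ G.neighborSet x then (R.succ_exists_unique x y h).choose else y

/-- Local coordinates around `x`: `localIdx x y z` is the position of `z` in the
directed cycle of `R` around `x`, counting from `y = 0`. -/
noncomputable def RotationSystem.localIdx {V : Type*} {G : SimpleGraph V}
    (R : RotationSystem G) (x y z : V) : ℕ :=
  sInf {n : ℕ | (R.succFn x)^[n] y = z}

/-- The coordinate sequence of a walk with respect to a previous vertex `prev`: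
at each step it records the local index of the next vertex in the rotation around
the current vertex, relative to the previous vertex. -/
noncomputable def RotationSystem.coordsW {V : Type*} {G : SimpleGraph V}
    (R : RotationSystem G) : (prev : V) → {x y : V} → G.Walk x y → List ℕ
  | _, _, _, SimpleGraph.Walk.nil => []
  | prev, x, _, @SimpleGraph.Walk.cons _ _ _ v _ _h q =>
      R.localIdx x prev v :: R.coordsW x q

/-- `L` is the coordinate sequence `C_{ab}(v)`: the lexicographically minimal coordinate
sequence over all shortest `a`-`v` paths, with origin pair `(a,b)`. -/
noncomputable def IsLexMinCoord {V : Type*} {G : SimpleGraph V} (R : RotationSystem G)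
    (a b v : V) (L : List ℕ) : Prop :=
  (∃ p : G.Walk a v, p.IsPath ∧ p.length = G.dist a v ∧ R.coordsW b p = L) ∧
    ∀ p : G.Walk a v, p.IsPath → p.length = G.dist a v →
      ¬ List.Lex (· < ·) (R.coordsW b p) L


section Aux

variable {V : Type*} {G : SimpleGraph V}

/-- The second-to-last vertex of a walk (or `prev` if the walk is nil). -/
def lastPrev : (prev : V) → {x y : V} → G.Walk x y → V
  | prev, _, _, SimpleGraph.Walk.nil => prev
  | _, x, _, SimpleGraph.Walk.cons _ q => lastPrev x q

@[simp] lemma lastPrev_nil (prev x : V) :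
    lastPrev prev (SimpleGraph.Walk.nil : G.Walk x x) = prev := rfl

@[simp] lemma lastPrev_cons (prev : V) {x y z : V} (h : G.Adj x y) (q : G.Walk y z) :
    lastPrev prev (SimpleGraph.Walk.cons h q) = lastPrev x q := rfl

@[simp] lemma coordsW_nil (R : RotationSystem G) (prev x : V) :
    R.coordsW prev (SimpleGraph.Walk.nil : G.Walk x x) = [] := rfl

@[simp] lemma coordsW_cons (R : RotationSystem G) (prev : V) {x y z : V}
    (h : G.Adj x y) (q : G.Walk y z) :
    R.coordsW prev (SimpleGraph.Walk.cons h q) = R.localIdx x prev y :: R.coordsW x q := rfl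

lemma lastPrev_append (prev : V) {x y z : V} (p : G.Walk x y) (q : G.Walk y z) :
    lastPrev prev (p.append q) = lastPrev (lastPrev prev p) q := by
  induction p generalizing prev with
  | nil => rfl
  | cons h p ih => simp [SimpleGraph.Walk.cons_append, ih]

lemma coordsW_append (R : RotationSystem G) (prev : V) {x y z : V}
    (p : G.Walk x y) (q : G.Walk y z) :
    R.coordsW prev (p.append q) = R.coordsW prev p ++ R.coordsW (lastPrev prev p) q := by
  induction p generalizing prev with
  | nil => rfl
  | cons h p ih => simp [SimpleGraph.Walk.cons_append, ih]

lemma coordsW_length (R : RotationSystem G) (prev : V) {x y : V} (p : G.Walk x y) :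
    (R.coordsW prev p).length = p.length := by
  induction p generalizing prev with
  | nil => rfl
  | cons h p ih => simp [ih]

lemma lex_append_left {l s₁ s₂ : List ℕ} (h : List.Lex (· < ·) s₁ s₂) :
    List.Lex (· < ·) (l ++ s₁) (l ++ s₂) := by
  induction l with
  | nil => exact h
  | cons a l ih => exact List.Lex.cons ih

lemma lex_append_of_lex {l₁ l₂ s₁ s₂ : List ℕ} (hlen : l₁.length = l₂.length)
    (h : List.Lex (· < ·) l₁ l₂) :
    List.Lex (· < ·) (l₁ ++ s₁) (l₂ ++ s₂) := by
  induction h with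
  | nil => simp at hlen
  | @cons a l₁' l₂' h ih => exact List.Lex.cons (ih (by simpa using hlen))
  | rel h => exact List.Lex.rel h

lemma eq_of_not_lex : ∀ {l₁ l₂ : List ℕ}, ¬ List.Lex (· < ·) l₁ l₂ →
    ¬ List.Lex (· < ·) l₂ l₁ → l₁ = l₂
  | [], [], _, _ => rfl
  | [], _ :: _, h₁, _ => absurd List.Lex.nil h₁
  | _ :: _, [], _, h₂ => absurd List.Lex.nil h₂
  | a :: t₁, c :: t₂, h₁, h₂ => by
    rcases Nat.lt_trichotomy a c with h | h | h
    · exact absurd (List.Lex.rel h) h₁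
    · subst h
      rw [eq_of_not_lex (fun hl => h₁ (List.Lex.cons hl)) (fun hl => h₂ (List.Lex.cons hl))]
    · exact absurd (List.Lex.rel h) h₂

end Aux

/-- If `u` is an inner vertex of the extreme-left shortest path `P_v` realizing
`C_{ab}(v)`, with predecessor `w` on `P_v`, then `C_{ab}(v)` is the concatenation of
`C_{ab}(u)` and `C_{uw}(v)`. -/
theorem stmt_13 {V : Type*} [Fintype V] (G : SimpleGraph V) [DecidableRel G.Adj]
    (hconn : G.Connected) (hdeg : ∀ x : V, 3 ≤ G.degree x)
    (R : RotationSystem G) (a b v u w : V) (hab : G.Adj a b)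
    (Lv Lu Luw : List ℕ)
    (hLv : IsLexMinCoord R a b v Lv)
    (hLu : IsLexMinCoord R a b u Lu)
    (hLuw : IsLexMinCoord R u w v Luw)
    -- the extreme-left shortest path `P_v` realizing `C_{ab}(v) = Lv`,
    -- decomposed at the inner vertex `u` and its predecessor `w`:
    (P₁ : G.Walk a w) (hwu : G.Adj w u) (P₂ : G.Walk u v) (huv : u ≠ v)
    (hPpath : (P₁.append (SimpleGraph.Walk.cons hwu P₂)).IsPath)
    (hPlen : (P₁.append (SimpleGraph.Walk.cons hwu P₂)).length = G.dist a v)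
    (hPcoords : R.coordsW b (P₁.append (SimpleGraph.Walk.cons hwu P₂)) = Lv) :
    Lv = Lu ++ Luw := by
  classical
  set Q₁ : G.Walk a u := P₁.append (SimpleGraph.Walk.cons hwu SimpleGraph.Walk.nil) with hQ₁
  have hQ₁len : Q₁.length = P₁.length + 1 := by simp [hQ₁]
  have hPlen' : (P₁.append (SimpleGraph.Walk.cons hwu P₂)).length
      = P₁.length + 1 + P₂.length := by
    simp [SimpleGraph.Walk.length_append]; omega
  have hd1 : G.dist a u ≤ P₁.length + 1 := hQ₁len ▸ SimpleGraph.dist_le Q₁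
  have hd2 : G.dist u v ≤ P₂.length := SimpleGraph.dist_le P₂
  have hd3 : G.dist a v ≤ G.dist a u + G.dist u v := hconn.dist_triangle
  have hdau : G.dist a u = P₁.length + 1 := by omega
  have hduv : G.dist u v = P₂.length := by omega
  have hQ₁dist : Q₁.length = G.dist a u := by omega
  have hQ₁path : Q₁.IsPath := Q₁.isPath_of_length_eq_dist hQ₁dist
  have hP₂path : P₂.IsPath := P₂.isPath_of_length_eq_dist hduv.symm
  have hlastQ₁ : lastPrev b Q₁ = w := by simp [hQ₁, lastPrev_append]
  -- the key decomposition of the coordinates of P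
  have hsplit : Lv = R.coordsW b Q₁ ++ R.coordsW w P₂ := by
    rw [← hPcoords, hQ₁, coordsW_append, coordsW_append, coordsW_cons, coordsW_cons,
      coordsW_nil]
    simp
  -- first part : coordsW b Q₁ = Lu
  have h1 : R.coordsW b Q₁ = Lu := by
    refine eq_of_not_lex (hLu.2 Q₁ hQ₁path hQ₁dist) (fun hlex => ?_)
    obtain ⟨Q, hQpath, hQlen, hQc⟩ := hLu.1
    have hWlen : (Q.append P₂).length = G.dist a v := by
      rw [SimpleGraph.Walk.length_append]; omega
    have hWpath : (Q.append P₂).IsPath := (Q.append P₂).isPath_of_length_eq_dist hWlen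
    refine hLv.2 (Q.append P₂) hWpath hWlen ?_
    rw [coordsW_append, hsplit]
    exact lex_append_of_lex
      (by rw [coordsW_length, coordsW_length, hQlen, hQ₁dist]) (hQc ▸ hlex)
  -- second part : coordsW w P₂ = Luw
  have h2 : R.coordsW w P₂ = Luw := by
    refine eq_of_not_lex (hLuw.2 P₂ hP₂path hduv.symm) (fun hlex => ?_)
    obtain ⟨Q₂, hQ₂path, hQ₂len, hQ₂c⟩ := hLuw.1
    have hWlen : (Q₁.append Q₂).length = G.dist a v := by
      rw [SimpleGraph.Walk.length_append]; omega
    have hWpath : (Q₁.append Q₂).IsPath := (Q₁.append Q₂).isPath_of_length_eq_dist hWlen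
    refine hLv.2 (Q₁.append Q₂) hWpath hWlen ?_
    rw [coordsW_append, hsplit, hlastQ₁, hQ₂c]
    exact lex_append_left hlex
  rw [hsplit, h1, h2]
end
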